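/- Let φ = ⟨⟨a₁,…,a_{n−1},aₙ]] be a quadratic n-fold Pfister form over a field F of characteristic 2, written φ = [aₙ,1] ⊥ φ''. Suppose d = aₙw² + wx + x² + φ''(u) for some w, x ∈ F, u in the space of φ'' with w ≠ 0. Then there exist b₁,…,b_{n−1} ∈ F× with φ ≅ ⟨⟨b₁,…,b_{n−1}, d/w²]]. -/

import Mathlib

set_option linter.unusedSectionVars false


/-- The subfield of squares `F²` of a field of characteristic 2. -/
def sqSubfield (F : Type*) [Field F] [CharP F 2] : Subfield F where
  carrier := {x | ∃ y : F, y ^ 2 = x}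
  mul_mem' := by rintro a b ⟨y, rfl⟩ ⟨z, rfl⟩; exact ⟨y * z, by ring⟩
  one_mem' := ⟨1, one_pow 2⟩
  add_mem' := by
    rintro a b ⟨y, rfl⟩ ⟨z, rfl⟩
    exact ⟨y + z, by rw [add_sq]; linear_combination (y*z) * (CharP.cast_eq_zero F 2)⟩
  zero_mem' := ⟨0, by ring⟩
  neg_mem' := by rintro a ⟨y, rfl⟩; exact ⟨y, (CharTwo.neg_eq _).symm⟩
  inv_mem' := by rintro a ⟨y, rfl⟩; exact ⟨y⁻¹, by rw [inv_pow]⟩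

/-- The monomial `β₁^{d₁} ⋯ βₙ^{dₙ}`. -/
def mono {R : Type*} [CommRing R] {n : ℕ} (β : Fin n → R) (d : Fin n → Bool) : R :=
  ∏ i, if d i then β i else 1

/-- The diagonal bilinear `n`-fold Pfister form `⟨⟨β₁,…,βₙ⟩⟩_b`. -/
def bPf (F : Type*) [Field F] {n : ℕ} (β : Fin n → F) (v w : (Fin n → Bool) → F) : F :=
  ∑ d, mono β d * v d * w d

/-- Pure part of the bilinear Pfister form. -/
def bPfPure (F : Type*) [Field F] {n : ℕ} (β : Fin n → F)
    (v w : {d : Fin n → Bool // d ≠ fun _ => false} → F) : F :=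
  ∑ d, mono β d.1 * v d * w d

/-- Anisotropy of a bilinear form. -/
def BAniso (F : Type*) [Field F] {V : Type*} [AddCommGroup V] [Module F V]
    (B : V → V → F) : Prop :=
  ∀ v : V, v ≠ 0 → B v v ≠ 0

/-- Isometry of bilinear forms. -/
def BilinIsom (F : Type*) [Field F] {V W : Type*} [AddCommGroup V] [Module F V]
    [AddCommGroup W] [Module F W] (B₁ : V → V → F) (B₂ : W → W → F) : Prop :=
  ∃ e : V ≃ₗ[F] W, ∀ v w, B₂ (e v) (e w) = B₁ v w

/-- Isometry of quadratic forms (given as value functions). -/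
def QuadIsom (F : Type*) [Field F] {V W : Type*} [AddCommGroup V] [Module F V]
    [AddCommGroup W] [Module F W] (q₁ : V → F) (q₂ : W → F) : Prop :=
  ∃ e : V ≃ₗ[F] W, ∀ v, q₂ (e v) = q₁ v

/-- The quadratic Pfister form `⟨⟨β₁,…,β_m, a]]` as a value function. -/
def qPf (R : Type*) [CommRing R] {m : ℕ} (β : Fin m → R) (a : R)
    (x : (Fin m → Bool) → R × R) : R :=
  ∑ e, mono β e * ((x e).1 ^ 2 + (x e).1 * (x e).2 + a * (x e).2 ^ 2)

/-- Minimal index where `d` is `true`. -/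
noncomputable def minIdx {n : ℕ} (d : Fin n → Bool) (hd : d ≠ fun _ => false) : Fin n :=
  (Finset.univ.filter fun i => d i = true).min' (by
    obtain ⟨i, hi⟩ := Function.ne_iff.mp hd
    exact ⟨i, Finset.mem_filter.mpr ⟨Finset.mem_univ i, by simpa using hi⟩⟩)

/-- Remove the `ℓ`-th entry from a tuple. -/
def removeIdx {R : Type*} {n : ℕ} (α : Fin n → R) (ℓ : Fin n) (i : Fin (n - 1)) : R :=
  if h : (i : ℕ) < (ℓ : ℕ) then α ⟨i, by omega⟩ else α ⟨(i : ℕ) + 1, by omega⟩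

/-- First `n-1` entries of a tuple. -/
def front {R : Type*} {n : ℕ} (α : Fin n → R) (i : Fin (n - 1)) : R :=
  α ⟨i, by omega⟩

/-- Last entry of a tuple (junk value `0` if the tuple is empty). -/
def qlast {R : Type*} [CommRing R] {n : ℕ} (α : Fin n → R) : R :=
  if h : n = 0 then 0 else α ⟨n - 1, by omega⟩

section Basics
variable {F : Type*} [Field F] {V W X : Type*} [AddCommGroup V] [Module F V]
  [AddCommGroup W] [Module F W] [AddCommGroup X] [Module F X]

theorem QuadIsom.refl (q : V → F) : QuadIsom F q q := ⟨LinearEquiv.refl F V, fun _ => rfl⟩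

theorem QuadIsom.symm {q₁ : V → F} {q₂ : W → F} (h : QuadIsom F q₁ q₂) : QuadIsom F q₂ q₁ := by
  obtain ⟨e, he⟩ := h
  exact ⟨e.symm, fun v => by rw [← he (e.symm v), e.apply_symm_apply]⟩

theorem QuadIsom.trans {q₁ : V → F} {q₂ : W → F} {q₃ : X → F}
    (h₁ : QuadIsom F q₁ q₂) (h₂ : QuadIsom F q₂ q₃) : QuadIsom F q₁ q₃ := by
  obtain ⟨e, he⟩ := h₁; obtain ⟨f, hf⟩ := h₂
  exact ⟨e.trans f, fun v => by rw [LinearEquiv.trans_apply, hf, he]⟩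

end Basics

section PfBasic
variable {F : Type*} [Field F]

/-- The underlying space of the quadratic Pfister form -/
abbrev Vm (F : Type*) [Field F] (m : ℕ) := (Fin m → Bool) → F × F

lemma mono_cons {m : ℕ} (a : Fin (m+1) → F) (t : Bool) (d : Fin m → Bool) :
    mono a (Fin.cons t d) = (if t then a 0 else 1) * mono (Fin.tail a) d := by
  unfold mono
  rw [Fin.prod_univ_succ]
  simp [Fin.tail]

lemma sum_consE {m : ℕ} (g : (Fin (m+1) → Bool) → F) :
    ∑ d, g d = (∑ d : Fin m → Bool, g (Fin.cons false d))
      + ∑ d : Fin m → Bool, g (Fin.cons true d) := by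
  rw [← Equiv.sum_comp (Fin.consEquiv fun _ => Bool) g, Fintype.sum_prod_type,
    Fintype.sum_bool]
  simp [Fin.consEquiv, add_comm]

lemma qPf_succ {m : ℕ} (a : Fin (m+1) → F) (c : F) (x : Vm F (m+1)) :
    qPf F a c x =
      qPf F (Fin.tail a) c (fun d => x (Fin.cons false d))
        + a 0 * qPf F (Fin.tail a) c (fun d => x (Fin.cons true d)) := by
  unfold qPf
  rw [sum_consE, Finset.mul_sum]
  congr 1
  · exact Finset.sum_congr rfl fun d _ => by rw [mono_cons]; simp
  · exact Finset.sum_congr rfl fun d _ => by rw [mono_cons]; simp; ring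

lemma qPf_smul {m : ℕ} (a : Fin m → F) (c k : F) (x : Vm F m) :
    qPf F a c (k • x) = k^2 * qPf F a c x := by
  unfold qPf
  rw [Finset.mul_sum]
  exact Finset.sum_congr rfl fun d _ => by simp; ring

end PfBasic

section Split
variable {F : Type*} [Field F]

def splitE (F : Type*) [Field F] (m : ℕ) : Vm F (m+1) ≃ₗ[F] Vm F m × Vm F m where
  toFun x := (fun d => x (Fin.cons false d), fun d => x (Fin.cons true d))
  invFun y := fun d => if d 0 then y.2 (Fin.tail d) else y.1 (Fin.tail d)
  map_add' x y := rfl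
  map_smul' c x := rfl
  left_inv x := by
    funext d
    conv_rhs => rw [← Fin.cons_self_tail d]
    by_cases h : d 0 <;> simp [h]
  right_inv y := by
    refine Prod.ext ?_ ?_ <;> funext d <;> simp [Fin.tail_cons]

lemma quadIsom_split {m : ℕ} (a : Fin (m+1) → F) (c : F) :
    QuadIsom F (qPf F a c)
      (fun z : Vm F m × Vm F m =>
        qPf F (Fin.tail a) c z.1 + a 0 * qPf F (Fin.tail a) c z.2) :=
  ⟨splitE F m, fun v => (qPf_succ a c v).symm⟩

/-- polar form of qPf (in char 2) -/
def polP {m : ℕ} (a : Fin m → F) (x y : Vm F m) : F :=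
  ∑ d, mono a d * ((x d).1 * (y d).2 + (y d).1 * (x d).2)

variable [CharP F 2]

lemma qPf_add {m : ℕ} (a : Fin m → F) (c : F) (x y : Vm F m) :
    qPf F a c (x + y) = qPf F a c x + qPf F a c y + polP a x y := by
  have h2 : (2 : F) = 0 := CharTwo.two_eq_zero
  unfold qPf polP
  rw [← Finset.sum_add_distrib, ← Finset.sum_add_distrib]
  refine Finset.sum_congr rfl fun d _ => ?_
  simp only [Pi.add_apply, Prod.fst_add, Prod.snd_add]
  linear_combination (mono a d * ((x d).1*(y d).1 + c*(x d).2*(y d).2)) * h2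

lemma polP_smul_right {m : ℕ} (a : Fin m → F) (k : F) (x y : Vm F m) :
    polP a x (k • y) = k * polP a x y := by
  unfold polP
  rw [Finset.mul_sum]
  exact Finset.sum_congr rfl fun d _ => by simp; ring

end Split

section Cmul
variable {F : Type*} [Field F] [CharP F 2]

/-- multiplication in the quadratic algebra F[i], i^2 = i + c -/
def cmul (c : F) (z v : F × F) : F × F :=
  (z.1 * v.1 + c * z.2 * v.2, z.2 * v.1 + z.1 * v.2 + z.2 * v.2)

lemma cmul_assoc (c : F) (z w v : F × F) :
    cmul c z (cmul c w v) = cmul c (cmul c z w) v := by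
  refine Prod.ext ?_ ?_ <;> simp [cmul] <;> ring

lemma cmul_comm (c : F) (z w : F × F) : cmul c z w = cmul c w z := by
  refine Prod.ext ?_ ?_ <;> simp [cmul] <;> ring

lemma cmul_conj (c : F) (z : F × F) :
    cmul c (z.1 + z.2, z.2) z = (z.1^2 + z.1*z.2 + c*z.2^2, 0) := by
  have h2 : (2 : F) = 0 := CharTwo.two_eq_zero
  refine Prod.ext ?_ ?_ <;> simp [cmul]
  · ring
  · linear_combination (z.1*z.2 + z.2^2) * h2

lemma cmul_scalar (c t : F) (v : F × F) : cmul c (t, 0) v = t • v := by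
  refine Prod.ext ?_ ?_ <;> simp [cmul]

lemma norm_cmul (c : F) (z v : F × F) :
    (cmul c z v).1^2 + (cmul c z v).1 * (cmul c z v).2 + c * (cmul c z v).2^2
      = (z.1^2 + z.1*z.2 + c*z.2^2) * (v.1^2 + v.1*v.2 + c*v.2^2) := by
  have h2 : (2 : F) = 0 := CharTwo.two_eq_zero
  obtain ⟨A, B⟩ := z; obtain ⟨p, q⟩ := v
  simp only [cmul]
  linear_combination (2*A*B*c*p*q + A*B*c*q^2 + B^2*c*p*q + B^2*c*q^2) * h2

lemma cmul_add (c : F) (z : F × F) (v w : F × F) :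
    cmul c z (v + w) = cmul c z v + cmul c z w := by
  refine Prod.ext ?_ ?_ <;> simp [cmul] <;> ring

lemma cmul_smul (c : F) (z : F × F) (k : F) (v : F × F) :
    cmul c z (k • v) = k • cmul c z v := by
  refine Prod.ext ?_ ?_ <;> simp [cmul] <;> ring

/-- multiplication by an element of nonzero norm is a similarity of qPf -/
lemma cmul_factor {m : ℕ} (a : Fin m → F) (c : F) (z : F × F)
    (hz : z.1^2 + z.1*z.2 + c*z.2^2 ≠ 0) :
    ∃ ℓ : Vm F m ≃ₗ[F] Vm F m,
      ∀ x, qPf F a c (ℓ x) = (z.1^2 + z.1*z.2 + c*z.2^2) * qPf F a c x := by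
  set t := z.1^2 + z.1*z.2 + c*z.2^2 with ht
  have hzz : cmul c z (z.1 + z.2, z.2) = (t, 0) := by
    rw [cmul_comm, cmul_conj]
  refine ⟨{ toFun := fun x d => cmul c z (x d)
            invFun := fun y d => t⁻¹ • cmul c (z.1 + z.2, z.2) (y d)
            map_add' := fun x y => by funext d; exact cmul_add c z (x d) (y d)
            map_smul' := fun k x => by funext d; exact cmul_smul c z k (x d)
            left_inv := fun x => by
              funext d
              show t⁻¹ • cmul c (z.1 + z.2, z.2) (cmul c z (x d)) = x d
              rw [cmul_assoc, cmul_comm c _ z, hzz, cmul_scalar, smul_smul,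
                inv_mul_cancel₀ hz, one_smul]
            right_inv := fun y => by
              funext d
              show cmul c z (t⁻¹ • cmul c (z.1 + z.2, z.2) (y d)) = y d
              rw [cmul_smul, cmul_assoc, hzz, cmul_scalar, smul_smul,
                inv_mul_cancel₀ hz, one_smul] }, fun x => ?_⟩
  unfold qPf
  rw [Finset.mul_sum]
  refine Finset.sum_congr rfl fun d _ => ?_
  show mono a d * ((cmul c z (x d)).1^2 + (cmul c z (x d)).1 * (cmul c z (x d)).2
      + c * (cmul c z (x d)).2^2) = t * (mono a d * ((x d).1^2 + (x d).1 * (x d).2 + c * (x d).2^2))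
  rw [norm_cmul]
  ring

end Cmul

section Shifts
variable {F : Type*} [Field F] [CharP F 2]

/-- build a linear equiv out of a linear involution -/
def involEquiv {V : Type*} [AddCommGroup V] [Module F V] (f : V → V)
    (hadd : ∀ x y, f (x + y) = f x + f y) (hsmul : ∀ (k : F) x, f (k • x) = k • f x)
    (hinv : ∀ x, f (f x) = x) : V ≃ₗ[F] V where
  toFun := f
  invFun := f
  map_add' := hadd
  map_smul' := hsmul
  left_inv := hinv
  right_inv := hinv

/-- Artin-Schreier shift of the last slot: `⟨⟨b;c]] ≅ ⟨⟨b; c+s+s²]]`. -/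
lemma as_shift {m : ℕ} (b : Fin m → F) (c s : F) :
    QuadIsom F (qPf F b c) (qPf F b (c + s + s^2)) := by
  have h2 : (2 : F) = 0 := CharTwo.two_eq_zero
  refine ⟨involEquiv (fun x d => ((x d).1 + s * (x d).2, (x d).2))
    (fun x y => by funext d; refine Prod.ext ?_ ?_ <;> simp <;> ring)
    (fun k x => by funext d; refine Prod.ext ?_ ?_ <;> simp <;> ring)
    (fun x => by
      funext d
      refine Prod.ext ?_ ?_ <;> simp
      linear_combination (s * (x d).2) * h2), fun x => ?_⟩
  show qPf F b (c + s + s^2) (fun d => ((x d).1 + s * (x d).2, (x d).2)) = _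
  unfold qPf
  refine Finset.sum_congr rfl fun d _ => ?_
  simp only
  linear_combination (mono b d * (s*(x d).1*(x d).2 + s^2*(x d).2^2 + s*(x d).2^2)) * h2

/-- the quaternion-algebra shift: `⟨⟨b, e; c+e·s²]] ≅ ⟨⟨b, e; c]]` at the split level. -/
lemma slot_shift {m : ℕ} (b : Fin m → F) (c e s : F) :
    QuadIsom F
      (fun z : Vm F m × Vm F m =>
        qPf F b (c + e * s^2) z.1 + e * qPf F b (c + e * s^2) z.2)
      (fun z : Vm F m × Vm F m => qPf F b c z.1 + e * qPf F b c z.2) := by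
  have h2 : (2 : F) = 0 := CharTwo.two_eq_zero
  refine ⟨involEquiv
      (fun z => (fun d => ((z.1 d).1 + e * s * (z.2 d).2, (z.1 d).2),
                 fun d => ((z.2 d).1 + s * (z.1 d).2, (z.2 d).2)))
      (fun x y => by
        refine Prod.ext ?_ ?_ <;> funext d <;> refine Prod.ext ?_ ?_ <;> simp <;> ring)
      (fun k x => by
        refine Prod.ext ?_ ?_ <;> funext d <;> refine Prod.ext ?_ ?_ <;> simp <;> ring)
      (fun x => by
        refine Prod.ext ?_ ?_ <;> funext d <;> refine Prod.ext ?_ ?_ <;> simp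
        · linear_combination (e * s * (x.2 d).2) * h2
        · linear_combination (s * (x.1 d).2) * h2), fun z => ?_⟩
  show qPf F b c (fun d => ((z.1 d).1 + e * s * (z.2 d).2, (z.1 d).2))
      + e * qPf F b c (fun d => ((z.2 d).1 + s * (z.1 d).2, (z.2 d).2)) = _
  unfold qPf
  dsimp only
  rw [Finset.mul_sum, Finset.mul_sum, ← Finset.sum_add_distrib, ← Finset.sum_add_distrib]
  refine Finset.sum_congr rfl fun d _ => ?_
  linear_combination (e * mono b d * ((z.1 d).1*s*(z.2 d).2 + (z.1 d).2*(z.2 d).1*s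
    + (z.1 d).2*s*(z.2 d).2)) * h2

end Shifts

section Congr
variable {F : Type*} [Field F] {V : Type*} [AddCommGroup V] [Module F V]

/-- `(x, y) ↦ (x + k•y, y)` -/
def shearL (k : F) : (V × V) ≃ₗ[F] V × V where
  toFun z := (z.1 + k • z.2, z.2)
  invFun z := (z.1 - k • z.2, z.2)
  map_add' x y := by refine Prod.ext ?_ ?_ <;> simp [smul_add] <;> abel
  map_smul' c x := by refine Prod.ext ?_ ?_ <;> simp [smul_comm c k]
  left_inv z := by refine Prod.ext ?_ ?_ <;> simp
  right_inv z := by refine Prod.ext ?_ ?_ <;> simp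

/-- `(x, y) ↦ (x, y + k•x)` -/
def shearR (k : F) : (V × V) ≃ₗ[F] V × V where
  toFun z := (z.1, z.2 + k • z.1)
  invFun z := (z.1, z.2 - k • z.1)
  map_add' x y := by refine Prod.ext ?_ ?_ <;> simp [smul_add] <;> abel
  map_smul' c x := by refine Prod.ext ?_ ?_ <;> simp [smul_comm c k]
  left_inv z := by refine Prod.ext ?_ ?_ <;> simp
  right_inv z := by refine Prod.ext ?_ ?_ <;> simp

/-- `(x, y) ↦ (x, k•y)` for `k ≠ 0` -/
def scaleSnd (k : F) (hk : k ≠ 0) : (V × V) ≃ₗ[F] V × V :=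
  (LinearEquiv.refl F V).prodCongr (LinearEquiv.smulOfNeZero F V k hk)

variable [CharP F 2]

/-- the matrix `[[1, β],[1, r]]` as a linear equivalence, assuming `r + β ≠ 0`. -/
def congrK (r β : F) (ht : r + β ≠ 0) : (V × V) ≃ₗ[F] V × V :=
  (shearL β).trans ((scaleSnd (r - β) (by rwa [CharTwo.sub_eq_add])).trans (shearR 1))

lemma congrK_apply (r β : F) (ht : r + β ≠ 0) (z : V × V) :
    congrK r β ht z = (z.1 + β • z.2, z.1 + r • z.2) := by
  have h2 : (2 : F) = 0 := CharTwo.two_eq_zero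
  refine Prod.ext ?_ ?_ <;>
    simp [congrK, shearL, shearR, scaleSnd, LinearEquiv.prodCongr_apply, sub_smul]
  abel
end Congr

section Round
variable {F : Type*} [Field F] [CharP F 2]

lemma congr_pair {m : ℕ} (b : Fin m → F) (c r β : F) (x y : Vm F m) :
    r * qPf F b c (x + β • y) + β * qPf F b c (x + r • y)
      = (r + β) * qPf F b c x + (r * β * (r + β)) * qPf F b c y := by
  have h2 : (2 : F) = 0 := CharTwo.two_eq_zero
  rw [qPf_add, qPf_add, qPf_smul, qPf_smul, polP_smul_right, polP_smul_right]
  linear_combination (r * β * polP b x y) * h2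

lemma qPf_fin0 (a : Fin 0 → F) (c : F) (v : Vm F 0) (d₀ : Fin 0 → Bool) :
    qPf F a c v = (v d₀).1^2 + (v d₀).1*(v d₀).2 + c*(v d₀).2^2 := by
  unfold qPf
  rw [Fintype.sum_unique]
  have h1 : ∀ d, mono a d = 1 := fun d => by simp [mono]
  have hv2 : ∀ d d' : Fin 0 → Bool, v d = v d' := fun d d' => by rw [Subsingleton.elim d d']
  rw [h1, one_mul, hv2 _ d₀]

theorem qPf_round {m : ℕ} (a : Fin m → F) (c : F) (v : Vm F m) (hv : qPf F a c v ≠ 0) :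
    ∃ ℓ : Vm F m ≃ₗ[F] Vm F m, ∀ x, qPf F a c (ℓ x) = qPf F a c v * qPf F a c x := by
  induction m with
  | zero =>
    obtain ⟨ℓ, hℓ⟩ := cmul_factor a c (v default) (by rwa [qPf_fin0 a c v default] at hv)
    refine ⟨ℓ, fun x => ?_⟩
    rw [hℓ, qPf_fin0 a c v default]
  | succ m IH =>
    have hts : qPf F a c v = qPf F (Fin.tail a) c (fun d => v (Fin.cons false d))
        + a 0 * qPf F (Fin.tail a) c (fun d => v (Fin.cons true d)) := qPf_succ a c v
    set r := qPf F (Fin.tail a) c (fun d => v (Fin.cons false d)) with hr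
    set s := qPf F (Fin.tail a) c (fun d => v (Fin.cons true d)) with hs
    have hv' : r + a 0 * s ≠ 0 := by rw [hts] at hv; exact hv
    have hpair : ∃ L : (Vm F m × Vm F m) ≃ₗ[F] (Vm F m × Vm F m),
        ∀ z, qPf F (Fin.tail a) c (L z).1 + a 0 * qPf F (Fin.tail a) c (L z).2
          = (r + a 0 * s) * (qPf F (Fin.tail a) c z.1 + a 0 * qPf F (Fin.tail a) c z.2) := by
      by_cases hs0 : s = 0
      · have hr0 : r ≠ 0 := by simpa [hs0] using hv'
        obtain ⟨ℓr, hℓr⟩ := IH (Fin.tail a) _ hr0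
        rw [← hr] at hℓr
        refine ⟨ℓr.prodCongr ℓr, fun z => ?_⟩
        rw [LinearEquiv.prodCongr_apply]
        dsimp only
        rw [hℓr, hℓr, hs0]
        ring
      · obtain ⟨ℓs, hℓs⟩ := IH (Fin.tail a) _ hs0
        by_cases hr0 : r = 0
        · have hes : a 0 * s ≠ 0 := by simpa [hr0] using hv'
          have he' : a 0 ≠ 0 := left_ne_zero_of_mul hes
          rw [← hs] at hℓs
          refine ⟨(LinearEquiv.prodComm F _ _).trans
            ((ℓs.trans (LinearEquiv.smulOfNeZero F _ (a 0) he')).prodCongr ℓs), fun z => ?_⟩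
          simp only [LinearEquiv.trans_apply, LinearEquiv.prodCongr_apply,
            LinearEquiv.prodComm_apply, LinearEquiv.smulOfNeZero_apply, Units.smul_mk0,
            Prod.fst_swap, Prod.snd_swap]
          rw [qPf_smul, hℓs, hℓs, hr0]
          ring
        · obtain ⟨ℓr, hℓr⟩ := IH (Fin.tail a) _ hr0
          rw [← hr] at hℓr
          rw [← hs] at hℓs
          have htβ : r + a 0 * s ≠ 0 := hv'
          set g := ℓs.trans ℓr with hg
          have hψg : ∀ w : Vm F m, qPf F (Fin.tail a) c (g w)
              = r * (s * qPf F (Fin.tail a) c w) := fun w => by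
            rw [hg, LinearEquiv.trans_apply, hℓr, hℓs]
          have hgy : ∀ w2 : Vm F m, r * s * qPf F (Fin.tail a) c (g.symm w2)
              = qPf F (Fin.tail a) c w2 := fun w2 => by
            have h5 := hψg (g.symm w2)
            rw [LinearEquiv.apply_symm_apply] at h5
            rw [h5]; ring
          refine ⟨((LinearEquiv.refl F (Vm F m)).prodCongr g.symm).trans
            ((congrK r (a 0 * s) htβ).trans (ℓr.prodCongr ℓs)), fun z => ?_⟩
          simp only [LinearEquiv.trans_apply, LinearEquiv.prodCongr_apply, LinearEquiv.refl_apply]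
          rw [congrK_apply]
          dsimp only
          rw [hℓr, hℓs]
          linear_combination congr_pair (Fin.tail a) c r (a 0 * s) z.1 (g.symm z.2)
            + ((r + a 0 * s) * a 0) * hgy z.2
    obtain ⟨L, hL⟩ := hpair
    obtain ⟨S, hS⟩ := quadIsom_split a c
    refine ⟨(S.trans L).trans S.symm, fun x => ?_⟩
    rw [LinearEquiv.trans_apply, LinearEquiv.trans_apply]
    have h1 : qPf F a c (S.symm (L (S x)))
        = qPf F (Fin.tail a) c (L (S x)).1 + a 0 * qPf F (Fin.tail a) c (L (S x)).2 := by
      rw [← hS (S.symm (L (S x))), LinearEquiv.apply_symm_apply]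
    have hS' : ∀ y, qPf F (Fin.tail a) c (S y).1 + a 0 * qPf F (Fin.tail a) c (S y).2
        = qPf F a c y := hS
    rw [h1, hL, hS', hts]

end Round

section Main
variable {F : Type*} [Field F] [CharP F 2]

lemma key_step {m : ℕ} (b : Fin m → F) (hb : ∀ i, b i ≠ 0) (c e : F) (he : e ≠ 0)
    (v : Vm F m) :
    ∃ b' : Fin (m+1) → F, (∀ i, b' i ≠ 0) ∧
      QuadIsom F (fun z : Vm F m × Vm F m => qPf F b c z.1 + e * qPf F b c z.2)
        (qPf F b' (c + e * qPf F b c v)) := by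
  by_cases ht : qPf F b c v = 0
  · refine ⟨Fin.cons e b, fun i => ?_, ?_⟩
    · rcases Fin.eq_zero_or_eq_succ i with h | ⟨j, rfl⟩
      · subst h; simpa using he
      · simpa using hb j
    · rw [ht, mul_zero, add_zero]
      have h := (quadIsom_split (Fin.cons e b) c).symm
      simpa only [Fin.tail_cons, Fin.cons_zero] using h
  · obtain ⟨ℓt, hℓt⟩ := qPf_round b c v ht
    have hD : QuadIsom F
        (fun z : Vm F m × Vm F m => qPf F b c z.1 + (e * qPf F b c v) * qPf F b c z.2)
        (fun z : Vm F m × Vm F m => qPf F b c z.1 + e * qPf F b c z.2) := by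
      refine ⟨(LinearEquiv.refl F _).prodCongr ℓt, fun z => ?_⟩
      simp only [LinearEquiv.prodCongr_apply, LinearEquiv.refl_apply]
      rw [hℓt]; ring
    have hshift := slot_shift b c (e * qPf F b c v) 1
    simp only [one_pow, mul_one] at hshift
    have hsplit := (quadIsom_split (Fin.cons (e * qPf F b c v) b)
      (c + e * qPf F b c v)).symm
    simp only [Fin.tail_cons, Fin.cons_zero] at hsplit
    refine ⟨Fin.cons (e * qPf F b c v) b, fun i => ?_, ?_⟩
    · rcases Fin.eq_zero_or_eq_succ i with h | ⟨j, rfl⟩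
      · subst h; simpa using mul_ne_zero he ht
      · simpa using hb j
    · exact (hD.symm.trans hshift.symm).trans hsplit

theorem aux_pfister {m : ℕ} (a : Fin m → F) (ha : ∀ i, a i ≠ 0) (u : Vm F m) (c : F)
    (hu : u (fun _ => false) = 0) :
    ∃ b : Fin m → F, (∀ i, b i ≠ 0) ∧
      QuadIsom F (qPf F a c) (qPf F b (c + qPf F a c u)) := by
  induction m with
  | zero =>
    have h0 : qPf F a c u = 0 := by
      rw [qPf_fin0 a c u (fun _ => false), hu]
      norm_num
    rw [h0, add_zero]
    exact ⟨a, ha, QuadIsom.refl _⟩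
  | succ m IH =>
    have hu₀ : (fun d => u (Fin.cons false d)) (fun _ => false : Fin m → Bool) = 0 := by
      show u (Fin.cons false fun _ => false) = 0
      have hc : (Fin.cons false fun _ => false) = (fun _ => false : Fin (m+1) → Bool) := by
        funext i
        refine Fin.cases ?_ ?_ i <;> simp
      rw [hc, hu]
    obtain ⟨b₀, hb₀, hIso⟩ := IH (Fin.tail a) (fun i => ha _)
      (fun d => u (Fin.cons false d)) hu₀
    obtain ⟨ℓ₀, hℓ₀⟩ := hIso
    obtain ⟨b', hb', hK⟩ := key_step b₀ hb₀
      (c + qPf F (Fin.tail a) c (fun d => u (Fin.cons false d))) (a 0) (ha 0)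
      (ℓ₀ (fun d => u (Fin.cons true d)))
    rw [hℓ₀ (fun d => u (Fin.cons true d))] at hK
    have hblock : QuadIsom F
        (fun z : Vm F m × Vm F m =>
          qPf F (Fin.tail a) c z.1 + a 0 * qPf F (Fin.tail a) c z.2)
        (fun z : Vm F m × Vm F m =>
          qPf F b₀ (c + qPf F (Fin.tail a) c (fun d => u (Fin.cons false d))) z.1
            + a 0 * qPf F b₀ (c + qPf F (Fin.tail a) c (fun d => u (Fin.cons false d))) z.2) := by
      refine ⟨ℓ₀.prodCongr ℓ₀, fun z => ?_⟩
      simp only [LinearEquiv.prodCongr_apply]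
      rw [hℓ₀, hℓ₀]
    refine ⟨b', hb', ?_⟩
    rw [qPf_succ a c u, ← add_assoc]
    exact ((quadIsom_split a c).trans hblock).trans hK

end Main

/-- write `φ = ⟨⟨a₁,…,a_{n-1},aₙ]] = [aₙ,1] ⊥ φ''` (here `φ''(u)`
is the value of `φ` on a vector `u` vanishing on the `[1,aₙ]`-block). If
`d = aₙw² + wx + x² + φ''(u)` with `w ≠ 0`, then `φ ≅ ⟨⟨b₁,…,b_{n-1}, d/w²]]`
for some `b₁,…,b_{n-1} ∈ F×`. -/
theorem stmt_16 (F : Type*) [Field F] [CharP F 2] (n : ℕ) (hn : 1 ≤ n)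
    (a : Fin (n - 1) → F) (ha : ∀ i, a i ≠ 0) (an : F)
    (d w x : F) (hw : w ≠ 0)
    (u : (Fin (n - 1) → Bool) → F × F) (hu : (u fun _ => false) = 0)
    (hd : d = an * w ^ 2 + w * x + x ^ 2 + qPf F a an u) :
    ∃ b : Fin (n - 1) → F, (∀ i, b i ≠ 0) ∧
      QuadIsom F (qPf F a an) (qPf F b (d / w ^ 2)) := by
  obtain ⟨b, hb, h₁⟩ := aux_pfister a ha (w⁻¹ • u) an
    (by rw [Pi.smul_apply, hu, smul_zero])
  refine ⟨b, hb, ?_⟩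
  have h₃ := h₁.trans (as_shift b (an + qPf F a an (w⁻¹ • u)) (x / w))
  have harith : an + qPf F a an (w⁻¹ • u) + x / w + (x / w)^2 = d / w^2 := by
    rw [qPf_smul, hd]
    field_simp
    ring
  rwa [harith] at h₃
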